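/- Reduction of cutting-plane closure to finite dimension: let B = {b1,...,bk} ⊆ Q[X], C ⊆ Q[X] a cone, Y = {y1,...,yk} fresh variables, and f : Lin(Y) → Q[X] the linear map sending a0 + a1 y1 + ... + ak yk to a0 + a1 b1 + ... + ak bk. Then cp_{ZB}(C) = C + f(cp_{ZY}(f^{-1}(C))), where ZB is the integer span of B and ZY the integer span of Y. -/
import Mathlib


open MvPolynomial Pointwise

def IsCone {σ : Type} (C : Set (MvPolynomial σ ℚ)) : Prop :=
  (0 : MvPolynomial σ ℚ) ∈ C ∧ (∀ x ∈ C, ∀ y ∈ C, x + y ∈ C) ∧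
    ∀ (a : ℚ), 0 ≤ a → ∀ x ∈ C, a • x ∈ C

/-- `D` is closed under cutting planes with respect to `L`. -/
def ClosedCP {σ : Type} (L D : Set (MvPolynomial σ ℚ)) : Prop :=
  ∀ (a b : ℤ), 0 < a → ∀ p ∈ L,
    a • p + (b : MvPolynomial σ ℚ) ∈ D →
      p + ((⌊(b : ℚ) / (a : ℚ)⌋ : ℤ) : MvPolynomial σ ℚ) ∈ D

/-- `cp_L(C)`: the least cone containing `C` closed under cutting planes w.r.t. `L`. -/
def cpClosure {σ : Type} (L C : Set (MvPolynomial σ ℚ)) : Set (MvPolynomial σ ℚ) :=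
  ⋂₀ {D | IsCone D ∧ C ⊆ D ∧ ClosedCP L D}

lemma isCone_cpClosure {σ : Type} (L C : Set (MvPolynomial σ ℚ)) : IsCone (cpClosure L C) := by
  refine ⟨?_, ?_, ?_⟩
  · exact Set.mem_sInter.2 fun D hD => hD.1.1
  · intro x hx y hy
    exact Set.mem_sInter.2 fun D hD =>
      hD.1.2.1 x (Set.mem_sInter.1 hx D hD) y (Set.mem_sInter.1 hy D hD)
  · intro a ha x hx
    exact Set.mem_sInter.2 fun D hD => hD.1.2.2 a ha x (Set.mem_sInter.1 hx D hD)

lemma subset_cpClosure {σ : Type} (L C : Set (MvPolynomial σ ℚ)) : C ⊆ cpClosure L C :=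
  fun x hx => Set.mem_sInter.2 fun _ hD => hD.2.1 hx

lemma closedCP_cpClosure {σ : Type} (L C : Set (MvPolynomial σ ℚ)) :
    ClosedCP L (cpClosure L C) := by
  intro a b ha p hp h
  exact Set.mem_sInter.2 fun D hD => hD.2.2 a b ha p hp (Set.mem_sInter.1 h D hD)

lemma cpClosure_le {σ : Type} {L C D : Set (MvPolynomial σ ℚ)}
    (h1 : IsCone D) (h2 : C ⊆ D) (h3 : ClosedCP L D) : cpClosure L C ⊆ D :=
  Set.sInter_subset_of_mem ⟨h1, h2, h3⟩

lemma intCast_eq_C {σ : Type} (n : ℤ) : ((n : ℤ) : MvPolynomial σ ℚ) = C (n : ℚ) := by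
  simp [MvPolynomial.C_eq_coe_nat]

lemma totalDegree_intCast' {σ : Type} (n : ℤ) :
    ((n : ℤ) : MvPolynomial σ ℚ).totalDegree = 0 := by
  rw [intCast_eq_C]; exact totalDegree_C _

/-- reduction of cutting-plane closure to finite dimension: let
`B = {b₁,…,b_k} ⊆ ℚ[X]`, `C ⊆ ℚ[X]` a cone, `Y = {y₁,…,y_k}` fresh variables, and
`f : Lin(Y) → ℚ[X]` the linear map sending `a₀ + a₁y₁ + … + a_k y_k` to
`a₀ + a₁b₁ + … + a_k b_k` (i.e. the restriction of `aeval B` to polynomials of degree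
at most one).  Then `cp_{ℤB}(C) = C + f(cp_{ℤY}(f⁻¹(C)))`, where `ℤB` is the integer
span of `B` and `ℤY` the integer span of `Y`, and
`f⁻¹(C) = {p ∈ Lin(Y) : f(p) ∈ C}`. -/
theorem cp_closure_reduction_to_finite_dim {σ : Type} [Fintype σ]
    (k : ℕ) (B : Fin k → MvPolynomial σ ℚ)
    (C : Set (MvPolynomial σ ℚ)) (hC : IsCone C) :
    cpClosure {q : MvPolynomial σ ℚ | ∃ c : Fin k → ℤ, q = ∑ i, c i • B i} C =
      C +
        (fun p : MvPolynomial (Fin k) ℚ => MvPolynomial.aeval B p) ''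
          cpClosure
            {p : MvPolynomial (Fin k) ℚ | ∃ c : Fin k → ℤ, p = ∑ i, c i • MvPolynomial.X i}
            {p : MvPolynomial (Fin k) ℚ |
              p.totalDegree ≤ 1 ∧ MvPolynomial.aeval B p ∈ C} := by
  set LX : Set (MvPolynomial σ ℚ) :=
    {q : MvPolynomial σ ℚ | ∃ c : Fin k → ℤ, q = ∑ i, c i • B i} with hLX
  set LY : Set (MvPolynomial (Fin k) ℚ) :=
    {p : MvPolynomial (Fin k) ℚ | ∃ c : Fin k → ℤ, p = ∑ i, c i • MvPolynomial.X i} with hLY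
  set C' : Set (MvPolynomial (Fin k) ℚ) :=
    {p : MvPolynomial (Fin k) ℚ |
      p.totalDegree ≤ 1 ∧ MvPolynomial.aeval B p ∈ C} with hC'
  set cpY := cpClosure LY C' with hcpY
  set f : MvPolynomial (Fin k) ℚ → MvPolynomial σ ℚ :=
    fun p => MvPolynomial.aeval B p with hf
  -- every element of cpY has total degree ≤ 1
  have hdeg : cpY ⊆ {p : MvPolynomial (Fin k) ℚ | p.totalDegree ≤ 1} := by
    apply cpClosure_le
    · refine ⟨by simp, ?_, ?_⟩
      · intro x hx y hy
        exact (totalDegree_add x y).trans (max_le hx hy)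
      · intro a _ x hx
        exact (totalDegree_smul_le a x).trans hx
    · intro p hp; exact hp.1
    · rintro a b ha p ⟨c, rfl⟩ _
      refine (totalDegree_add _ _).trans (max_le ?_ ?_)
      · refine (totalDegree_finset_sum _ _).trans (Finset.sup_le fun i _ => ?_)
        calc (c i • MvPolynomial.X i : MvPolynomial (Fin k) ℚ).totalDegree
            = ((c i : ℚ) • MvPolynomial.X i : MvPolynomial (Fin k) ℚ).totalDegree := by
              rw [Int.cast_smul_eq_zsmul]
          _ ≤ (MvPolynomial.X i : MvPolynomial (Fin k) ℚ).totalDegree :=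
              totalDegree_smul_le _ _
          _ ≤ 1 := by rw [totalDegree_X]
      · rw [totalDegree_intCast']; exact zero_le_one
  apply Set.Subset.antisymm
  · -- cpClosure LX C ⊆ C + f '' cpY
    apply cpClosure_le
    · -- RHS is a cone
      have hconeY := isCone_cpClosure LY C'
      refine ⟨?_, ?_, ?_⟩
      · exact Set.mem_add.2 ⟨0, hC.1, f 0, ⟨0, hconeY.1, rfl⟩, by simp [hf]⟩
      · rintro x hx y hy
        obtain ⟨x1, hx1, x2, ⟨x2', hx2', rfl⟩, rfl⟩ := Set.mem_add.1 hx
        obtain ⟨y1, hy1, y2, ⟨y2', hy2', rfl⟩, rfl⟩ := Set.mem_add.1 hy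
        refine Set.mem_add.2 ⟨x1 + y1, hC.2.1 _ hx1 _ hy1,
          f (x2' + y2'), ⟨x2' + y2', hconeY.2.1 _ hx2' _ hy2', rfl⟩, ?_⟩
        simp only [hf, map_add]; ring
      · rintro a ha x hx
        obtain ⟨x1, hx1, x2, ⟨x2', hx2', rfl⟩, rfl⟩ := Set.mem_add.1 hx
        refine Set.mem_add.2 ⟨a • x1, hC.2.2 a ha _ hx1,
          f (a • x2'), ⟨a • x2', hconeY.2.2 a ha _ hx2', rfl⟩, ?_⟩
        simp only [hf, map_smul]; rw [smul_add]
    · -- C ⊆ RHS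
      intro x hx
      exact Set.mem_add.2 ⟨x, hx, f 0, ⟨0, (isCone_cpClosure LY C').1, rfl⟩, by simp [hf]⟩
    · -- RHS closed under cutting planes w.r.t. LX
      rintro a b ha p ⟨c, rfl⟩ h
      obtain ⟨c₀, hc₀, _, ⟨q, hq, rfl⟩, heq⟩ := Set.mem_add.1 h
      set p' : MvPolynomial (Fin k) ℚ := ∑ i, c i • MvPolynomial.X i with hp'
      have hfp' : f p' = ∑ i, c i • B i := by
        simp only [hf, hp', map_sum, map_zsmul, aeval_X]
      set r : MvPolynomial (Fin k) ℚ := a • p' + (b : MvPolynomial (Fin k) ℚ) - q with hr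
      have hfr : f r = c₀ := by
        have : f q + c₀ = a • (∑ i, c i • B i) + (b : MvPolynomial σ ℚ) := by
          rw [add_comm]; exact heq
        simp only [hr, hf] at *
        rw [map_sub, map_add, map_zsmul, map_intCast, hfp']
        linear_combination -this
      have hrdeg : r.totalDegree ≤ 1 := by
        have h1 : (a • p' + (b : MvPolynomial (Fin k) ℚ)).totalDegree ≤ 1 := by
          refine (totalDegree_add _ _).trans (max_le ?_ ?_)
          · calc (a • p').totalDegree = ((a : ℚ) • p').totalDegree := by
                  rw [Int.cast_smul_eq_zsmul]
              _ ≤ p'.totalDegree := totalDegree_smul_le _ _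
              _ ≤ 1 := by
                  refine (totalDegree_finset_sum _ _).trans (Finset.sup_le fun i _ => ?_)
                  calc (c i • MvPolynomial.X i : MvPolynomial (Fin k) ℚ).totalDegree
                      = ((c i : ℚ) • MvPolynomial.X i :
                          MvPolynomial (Fin k) ℚ).totalDegree := by
                        rw [Int.cast_smul_eq_zsmul]
                    _ ≤ (MvPolynomial.X i : MvPolynomial (Fin k) ℚ).totalDegree :=
                        totalDegree_smul_le _ _
                    _ ≤ 1 := by rw [totalDegree_X]
          · rw [totalDegree_intCast']; exact zero_le_one
        rw [hr, sub_eq_add_neg]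
        refine (totalDegree_add _ _).trans (max_le h1 ?_)
        rw [totalDegree_neg]
        exact hdeg hq
      have hrC' : r ∈ C' := ⟨hrdeg, by
        show (aeval B) r ∈ C
        rw [show (aeval B) r = c₀ from hfr]; exact hc₀⟩
      have hqr : q + r ∈ cpY :=
        (isCone_cpClosure LY C').2.1 _ hq _ (subset_cpClosure LY C' hrC')
      have hqr' : a • p' + (b : MvPolynomial (Fin k) ℚ) ∈ cpY := by
        have he : q + r = a • p' + (b : MvPolynomial (Fin k) ℚ) := by
          rw [hr]; ring
        rwa [he] at hqr
      have hcp := closedCP_cpClosure LY C' a b ha p' ⟨c, rfl⟩ hqr'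
      refine Set.mem_add.2 ⟨0, hC.1, f (p' + ((⌊(b : ℚ) / (a : ℚ)⌋ : ℤ) :
        MvPolynomial (Fin k) ℚ)), ⟨_, hcp, rfl⟩, ?_⟩
      rw [zero_add]
      show (aeval B) (p' + ((⌊(b : ℚ) / (a : ℚ)⌋ : ℤ) : MvPolynomial (Fin k) ℚ)) = _
      rw [map_add, map_intCast, show (aeval B) p' = ∑ i, c i • B i from hfp']
  · -- C + f '' cpY ⊆ cpClosure LX C
    have hsub : cpY ⊆ f ⁻¹' (cpClosure LX C) := by
      apply cpClosure_le
      · have hcone := isCone_cpClosure LX C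
        refine ⟨?_, ?_, ?_⟩
        · simp only [Set.mem_preimage, hf, map_zero]; exact hcone.1
        · intro x hx y hy
          simp only [Set.mem_preimage, hf, map_add] at *
          exact hcone.2.1 _ hx _ hy
        · intro a ha x hx
          simp only [Set.mem_preimage, hf, map_smul] at *
          exact hcone.2.2 a ha _ hx
      · intro p hp
        exact subset_cpClosure LX C hp.2
      · rintro a b ha p ⟨c, rfl⟩ h
        simp only [Set.mem_preimage, hf, map_add, map_zsmul, map_intCast, map_sum,
          aeval_X] at h ⊢
        exact closedCP_cpClosure LX C a b ha _ ⟨c, rfl⟩ h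
    rintro x hx
    obtain ⟨x1, hx1, _, ⟨q, hq, rfl⟩, rfl⟩ := Set.mem_add.1 hx
    exact (isCone_cpClosure LX C).2.1 _ (subset_cpClosure LX C hx1) _ (hsub hq)
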